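/- Let f : ℕ+ → ℕ+ be the successor function f(i) = i + 1. Then for every i ∈ ℕ+, the image of the generator a_i in the group 𝒫(f) has infinite order; in particular 𝒫(f) is nontrivial. -/

import Mathlib

/-- The relators of the presentation `𝒫(f)`: for each `i ∈ ℕ+`, the word
`a_{f(i)}⁻¹ a_i a_{f(i)} a_i⁻²` in the free group on `ℕ+`. -/
def Prels (f : ℕ+ → ℕ+) : Set (FreeGroup ℕ+) :=
  {r | ∃ i : ℕ+, r =
    (FreeGroup.of (f i))⁻¹ * FreeGroup.of i * FreeGroup.of (f i) * (FreeGroup.of i ^ 2)⁻¹}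

noncomputable section Aux

abbrev G0 := Equiv.Perm ℚ

def hh : G0 := Equiv.addRight (1 : ℚ)
def kk : G0 := Equiv.mulRight₀ (2⁻¹ : ℚ) (by norm_num)

lemma hh_pow (n : ℕ) (x : ℚ) : (hh ^ n) x = x + n := by
  induction n with
  | zero => simp
  | succ n ih => rw [pow_succ, Equiv.Perm.mul_apply]; simp [hh, ih]; ring

lemma kk_pow (n : ℕ) (x : ℚ) : (kk ^ n) x = x * (2⁻¹ : ℚ) ^ n := by
  induction n with
  | zero => simp
  | succ n ih => rw [pow_succ', Equiv.Perm.mul_apply, ih]; simp [kk]; ring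

lemma hh_inf : ¬ IsOfFinOrder hh := by
  intro hf
  obtain ⟨n, hn, he⟩ := isOfFinOrder_iff_pow_eq_one.mp hf
  have := congrArg (fun e : G0 => e (0 : ℚ)) he
  simp [hh_pow] at this
  omega

lemma kk_inf : ¬ IsOfFinOrder kk := by
  intro hf
  obtain ⟨n, hn, he⟩ := isOfFinOrder_iff_pow_eq_one.mp hf
  have := congrArg (fun e : G0 => e (1 : ℚ)) he
  simp [kk_pow] at this
  have h2 : (1 : ℚ) < 2 ^ n := one_lt_pow₀ (by norm_num) hn.ne'
  rw [this] at h2; exact lt_irrefl 1 h2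

lemma key_rel : kk⁻¹ * hh * kk * (hh ^ 2)⁻¹ = 1 := by
  rw [mul_inv_eq_one]
  ext x
  simp [hh, kk, pow_succ, Equiv.Perm.mul_apply, Equiv.Perm.inv_def]
  ring

def m1 : Multiplicative ℤ →* G0 := zpowersHom G0 hh
def m2 : Multiplicative ℤ →* G0 := zpowersHom G0 kk

lemma m1_inj : Function.Injective m1 := fun a b hab => by
  have := (injective_zpow_iff_not_isOfFinOrder).mpr hh_inf
  exact this hab

lemma m2_inj : Function.Injective m2 := fun a b hab => by
  have := (injective_zpow_iff_not_isOfFinOrder).mpr kk_inf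
  exact this hab

def e1 : Multiplicative ℤ ≃* m1.range :=
  MulEquiv.ofBijective m1.rangeRestrict
    ⟨fun a b hab => m1_inj (by simpa [MonoidHom.coe_rangeRestrict] using congrArg Subtype.val hab),
     m1.rangeRestrict_surjective⟩

def e2 : Multiplicative ℤ ≃* m2.range :=
  MulEquiv.ofBijective m2.rangeRestrict
    ⟨fun a b hab => m2_inj (by simpa [MonoidHom.coe_rangeRestrict] using congrArg Subtype.val hab),
     m2.rangeRestrict_surjective⟩

def phi : (m1.range : Subgroup G0) ≃* m2.range := e1.symm.trans e2

abbrev T := HNNExtension G0 m1.range m2.range phi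

def aH : (m1.range : Subgroup G0) := m1.rangeRestrict (Multiplicative.ofAdd 1)

lemma aH_coe : (aH : G0) = hh := by
  rw [aH, MonoidHom.coe_rangeRestrict]
  simp [m1, zpowersHom_apply]

lemma phi_aH_coe : ((phi aH : m2.range) : G0) = kk := by
  have : phi aH = e2 (Multiplicative.ofAdd 1) := by
    simp only [phi, MulEquiv.trans_apply]
    congr 1
    exact (MulEquiv.symm_apply_eq _).mpr rfl
  rw [this]
  show ((m2.rangeRestrict (Multiplicative.ofAdd 1) : m2.range) : G0) = kk
  rw [MonoidHom.coe_rangeRestrict]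
  simp [m2, zpowersHom_apply]

open HNNExtension in
lemma conj_rel : t * (of hh : T) * t⁻¹ = of kk := by
  have := HNNExtension.equiv_eq_conj (G := G0) (A := m1.range) (B := m2.range) (φ := phi) aH
  rw [aH_coe, phi_aH_coe] at this
  exact this.symm

open HNNExtension in
def iota : ℕ+ → T := fun i => t ^ (i : ℕ) * of hh * (t ^ (i : ℕ))⁻¹

open HNNExtension in
lemma iota_rels : ∀ r ∈ Prels (fun i : ℕ+ => i + 1), FreeGroup.lift iota r = 1 := by
  rintro r ⟨i, rfl⟩
  simp only [map_mul, map_inv, map_pow, FreeGroup.lift_apply_of]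
  have hcast : (((i + 1 : ℕ+) : ℕ)) = (i : ℕ) + 1 := by
    simp [PNat.add_coe]
  set n := (i : ℕ)
  have h1 : iota (i + 1) = (MulAut.conj (t ^ n : T)) (t * of hh * t⁻¹) := by
    simp only [iota, hcast, MulAut.conj_apply, pow_succ]
    group
  have h2 : iota i = (MulAut.conj (t ^ n : T)) (of hh) := by
    simp only [iota, MulAut.conj_apply]
    rfl
  rw [h1, h2, conj_rel]
  have key : (of (kk⁻¹ * hh) : T) * of kk * ((of hh : T) ^ 2)⁻¹ = 1 := by
    have h0 := congrArg (of : G0 →* T) key_rel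
    simp only [map_mul, map_inv, map_pow, map_one] at h0
    rw [map_mul, map_inv]
    exact h0
  rw [← map_inv, ← map_pow, ← map_inv, ← map_mul, ← map_mul, ← map_mul, ← map_inv, ← map_mul,
    key, map_one]

end Aux

open HNNExtension in
theorem stmt_10 :
    (∀ i : ℕ+, ¬ IsOfFinOrder
      (PresentedGroup.of (rels := Prels (fun i : ℕ+ => i + 1)) i)) ∧
      Nontrivial (PresentedGroup (Prels (fun i : ℕ+ => i + 1))) := by
  have main : ∀ i : ℕ+, ¬ IsOfFinOrder
      (PresentedGroup.of (rels := Prels (fun i : ℕ+ => i + 1)) i) := by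
    intro i hfin
    have h2 := (PresentedGroup.toGroup (f := iota) iota_rels).isOfFinOrder hfin
    rw [PresentedGroup.toGroup.of] at h2
    have h3 : IsOfFinOrder (of hh : T) := by
      have h4 := (MulAut.conj ((t : T) ^ (i : ℕ))⁻¹).toMonoidHom.isOfFinOrder h2
      rwa [show (MulAut.conj ((t : T) ^ (i : ℕ))⁻¹).toMonoidHom (iota i) = of hh from by
        simp only [MulEquiv.toMonoidHom_eq_coe, MonoidHom.coe_coe, MulAut.conj_apply, iota,
          inv_inv]
        group] at h4
    have e := orderOf_injective (of : G0 →* T) (of_injective phi) hh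
    have h5 : orderOf hh = 0 := orderOf_eq_zero_iff.mpr hh_inf
    exact (orderOf_eq_zero_iff.mp (e.trans h5)) h3
  refine ⟨main, ⟨PresentedGroup.of 1, 1, fun hcontra => main 1 ?_⟩⟩
  rw [hcontra]
  exact IsOfFinOrder.one
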